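/- Let M be a POVM whose elements are linearly independent, N any POVM, λ ∈ [0,1), and N' the POVM with elements ((1−λ)N_j)_j together with the single element λ𝟙. Then N' is a stochastic post-processing of M if and only if N is a stochastic post-processing of M. -/

import Mathlib

open Matrix BigOperators
open scoped Classical ComplexOrder

/-- A (finitely indexed) POVM on `ℂ^d`: positive semidefinite elements summing to the identity. -/
def IsPOVM {d : ℕ} {ι : Type*} [Fintype ι] (M : ι → Matrix (Fin d) (Fin d) ℂ) : Prop :=
  (∀ i, (M i).PosSemidef) ∧ ∑ i, M i = 1

/-- A density matrix: positive semidefinite with unit trace. -/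
def IsDensity {d : ℕ} (ρ : Matrix (Fin d) (Fin d) ℂ) : Prop :=
  ρ.PosSemidef ∧ ρ.trace = 1

/-- Outcome probability `tr(M_i ρ)` (real part). -/
noncomputable def prob {d : ℕ} {ι : Type*} [Fintype ι] (M : ι → Matrix (Fin d) (Fin d) ℂ)
    (ρ : Matrix (Fin d) (Fin d) ℂ) (i : ι) : ℝ := ((M i * ρ).trace).re

/-- Measured relative entropy `D_M(ρ‖σ) = Σ_i p_i log (p_i / q_i)`. -/
noncomputable def Dmeas {d : ℕ} {ι : Type*} [Fintype ι] (M : ι → Matrix (Fin d) (Fin d) ℂ)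
    (ρ σ : Matrix (Fin d) (Fin d) ℂ) : ℝ :=
  ∑ i, prob M ρ i * Real.log (prob M ρ i / prob M σ i)

/-- Observational entropy `S_M(ρ) = -Σ_i p_i log (p_i / V_i)` with `V_i = tr M_i`. -/
noncomputable def Sobs {d : ℕ} {ι : Type*} [Fintype ι] (M : ι → Matrix (Fin d) (Fin d) ℂ)
    (ρ : Matrix (Fin d) (Fin d) ℂ) : ℝ :=
  -∑ i, prob M ρ i * Real.log (prob M ρ i / ((M i).trace).re)

/-- `N` is a stochastic post-processing of `M` (`N ≫ M`). -/
def StochPost {d : ℕ} {ι κ : Type*} [Fintype ι] [Fintype κ]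
    (N : κ → Matrix (Fin d) (Fin d) ℂ) (M : ι → Matrix (Fin d) (Fin d) ℂ) : Prop :=
  ∃ Λ : κ → ι → ℝ, (∀ j i, 0 ≤ Λ j i) ∧ (∀ i, ∑ j, Λ j i = 1) ∧
    ∀ j, N j = ∑ i, Λ j i • M i

theorem stmt12 {d m n : ℕ} (M : Fin m → Matrix (Fin d) (Fin d) ℂ)
    (N : Fin n → Matrix (Fin d) (Fin d) ℂ) (hM : IsPOVM M) (hN : IsPOVM N)
    (hind : LinearIndependent ℝ M) (l : ℝ) (hl : l ∈ Set.Ico (0 : ℝ) 1) :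
    StochPost (Sum.elim (fun j => (1 - l) • N j)
        (fun _ : Fin 1 => l • (1 : Matrix (Fin d) (Fin d) ℂ)) :
        Fin n ⊕ Fin 1 → Matrix (Fin d) (Fin d) ℂ) M
      ↔ StochPost N M := by
  obtain ⟨hl0, hl1⟩ := hl
  have hne : (1 - l) ≠ 0 := by linarith
  constructor
  · rintro ⟨Λ, hpos, hcol, heq⟩
    -- the inr row has constant coefficient l
    have hrow : ∀ i, Λ (Sum.inr 0) i = l := by
      have h1 : l • (1 : Matrix (Fin d) (Fin d) ℂ) = ∑ i, Λ (Sum.inr 0) i • M i := heq (Sum.inr 0)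
      have h2 : l • (1 : Matrix (Fin d) (Fin d) ℂ) = ∑ i, l • M i := by
        rw [← Finset.smul_sum, hM.2]
      have h3 : ∑ i, (Λ (Sum.inr 0) i - l) • M i = 0 := by
        simp only [sub_smul, Finset.sum_sub_distrib]
        rw [← h1, ← h2, sub_self]
      have := (Fintype.linearIndependent_iff.mp hind) (fun i => Λ (Sum.inr 0) i - l) h3
      intro i
      have h := this i
      linarith
    refine ⟨fun j i => Λ (Sum.inl j) i / (1 - l), fun j i => div_nonneg (hpos _ i) (by linarith), ?_, ?_⟩
    · intro i
      have hc := hcol i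
      rw [Fintype.sum_sum_type] at hc
      have h01 : ∑ j : Fin 1, Λ (Sum.inr j) i = l := by
        simp [hrow i]
      rw [← Finset.sum_div]
      field_simp
      linarith
    · intro j
      have hj := heq (Sum.inl j)
      simp only [Sum.elim_inl] at hj
      have : N j = (1 - l)⁻¹ • ((1 - l) • N j) := by
        rw [smul_smul, inv_mul_cancel₀ hne, one_smul]
      rw [this, hj, Finset.smul_sum]
      simp only [smul_smul, div_eq_inv_mul]
  · rintro ⟨Λ, hpos, hcol, heq⟩
    refine ⟨Sum.elim (fun j i => (1 - l) * Λ j i) (fun _ _ => l), ?_, ?_, ?_⟩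
    · rintro (j | j) i
      · exact mul_nonneg (by linarith) (hpos j i)
      · exact hl0
    · intro i
      rw [Fintype.sum_sum_type]
      simp only [Sum.elim_inl, Sum.elim_inr]
      rw [← Finset.mul_sum, hcol i]
      simp
    · rintro (j | j)
      · simp only [Sum.elim_inl, heq j, Finset.smul_sum]
        refine Finset.sum_congr rfl fun i _ => ?_
        rw [smul_smul]
      · simp only [Sum.elim_inr]
        rw [← hM.2, Finset.smul_sum]
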